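/- Let G be a finite group, p a prime, and H a subgroup of G. Let A be an abelian normal subgroup of H which is a p-group and whose index [H : A] is coprime to p (i.e., A is an abelian normal Sylow p-subgroup of H). Suppose that for every g ∈ G, the index [H : H ∩ gHg⁻¹] is coprime to p. Then A is a normal subgroup of G. -/

import Mathlib

/-- In a finite group, a normal `p`-subgroup is contained in every subgroup of
index coprime to `p`. -/
lemma aux_normal_pgroup_le_of_coprime_index {G : Type*} [Group G] [Finite G] {p : ℕ}
    (hp : p.Prime) {A K : Subgroup G} (hA : A.Normal) (hpA : IsPGroup p A)
    (hK : Nat.Coprime K.index p) : A ≤ K := by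
  haveI : Fact p.Prime := ⟨hp⟩
  haveI := hA
  set n := (A ⊓ K).relIndex A with hn
  have h1 : Nat.card (↥(A ⊓ K)) * n = Nat.card A := by
    simpa [Subgroup.relIndex_bot_left] using
      Subgroup.relIndex_mul_relIndex ⊥ (A ⊓ K) A bot_le inf_le_left
  have h4 : Nat.card A * A.relIndex (A ⊔ K) = Nat.card (↥(A ⊔ K)) := by
    simpa [Subgroup.relIndex_bot_left] using
      Subgroup.relIndex_mul_relIndex ⊥ A (A ⊔ K) bot_le le_sup_left
  have h2 : Nat.card K * K.relIndex (A ⊔ K) = Nat.card (↥(A ⊔ K)) := by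
    simpa [Subgroup.relIndex_bot_left] using
      Subgroup.relIndex_mul_relIndex ⊥ K (A ⊔ K) bot_le le_sup_right
  have h5 : Nat.card (↥(A ⊓ K)) * A.relIndex K = Nat.card K := by
    have := Subgroup.relIndex_mul_relIndex ⊥ (A ⊓ K) K bot_le inf_le_right
    simpa [Subgroup.relIndex_bot_left, Subgroup.inf_relIndex_right] using this
  have h3 : A.relIndex (A ⊔ K) = A.relIndex K := Subgroup.relIndex_sup_left K A
  have key : Nat.card K * n = Nat.card K * K.relIndex (A ⊔ K) := by
    calc Nat.card K * n = Nat.card (↥(A ⊓ K)) * A.relIndex K * n := by rw [h5]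
      _ = Nat.card (↥(A ⊓ K)) * n * A.relIndex K := by ring
      _ = Nat.card A * A.relIndex K := by rw [h1]
      _ = Nat.card A * A.relIndex (A ⊔ K) := by rw [h3]
      _ = Nat.card (↥(A ⊔ K)) := h4
      _ = Nat.card K * K.relIndex (A ⊔ K) := h2.symm
  have hnval : n = K.relIndex (A ⊔ K) := Nat.eq_of_mul_eq_mul_left Nat.card_pos key
  have hdvd : n ∣ K.index := hnval ▸ Subgroup.relIndex_dvd_index_of_le le_sup_right
  have hcop : n.Coprime p := Nat.Coprime.coprime_dvd_left hdvd hK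
  obtain ⟨k, hk⟩ := IsPGroup.iff_card.mp hpA
  have hdvd2 : n ∣ p ^ k := hk ▸ Dvd.intro_left _ h1
  have hone : n = 1 := Nat.Coprime.eq_one_of_dvd (hcop.pow_right k) hdvd2
  exact le_trans (Subgroup.relIndex_eq_one.mp hone) inf_le_right

/-- In a finite group, every `p`-subgroup is contained in a normal `p`-subgroup of
index coprime to `p`. -/
lemma aux_pgroup_le_normal_pgroup {G : Type*} [Group G] [Finite G] {p : ℕ}
    (hp : p.Prime) {A P : Subgroup G} (hA : A.Normal) (hpA : IsPGroup p A)
    (hidx : Nat.Coprime A.index p) (hP : IsPGroup p P) : P ≤ A := by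
  haveI : Fact p.Prime := ⟨hp⟩
  haveI := hA
  have hsup : IsPGroup p (↥(P ⊔ A)) := hP.to_sup_of_normal_right hpA
  obtain ⟨k, hk⟩ := IsPGroup.iff_card.mp hsup
  have hcardmul : Nat.card A * A.relIndex (P ⊔ A) = Nat.card (↥(P ⊔ A)) := by
    simpa [Subgroup.relIndex_bot_left] using
      Subgroup.relIndex_mul_relIndex ⊥ A (P ⊔ A) bot_le le_sup_right
  have h1 : A.relIndex (P ⊔ A) ∣ p ^ k := by
    rw [← hk]
    exact Dvd.intro_left _ hcardmul
  have h2 : A.relIndex (P ⊔ A) ∣ A.index := Subgroup.relIndex_dvd_index_of_normal A _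
  have hone : A.relIndex (P ⊔ A) = 1 :=
    Nat.Coprime.eq_one_of_dvd ((Nat.Coprime.coprime_dvd_left h2 hidx).pow_right k) h1
  exact le_sup_left.trans (Subgroup.relIndex_eq_one.mp hone)

/-- Group-theoretic claim inside the proof of Theorem 3.4: let `G` be a finite group,
`H ≤ G`, `p` a prime, and `A ≤ H` an abelian `p`-subgroup which is normal in `H` and
whose index in `H` is coprime to `p` (an abelian normal Sylow `p`-subgroup of `H`).
If for every `g ∈ G` the index of `H ∩ gHg⁻¹` in `H` is coprime to `p`, then `A` is
normal in all of `G`. -/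
theorem abelian_normal_sylow_is_normal_in_ambient {G : Type*} [Group G] [Finite G]
    (p : ℕ) (hp : p.Prime) (H A : Subgroup G) (hAH : A ≤ H)
    (hab : IsMulCommutative A) (hApg : IsPGroup p A)
    (hAnorm : (A.subgroupOf H).Normal)
    (hAidx : Nat.Coprime (A.subgroupOf H).index p)
    (hconj : ∀ g : G,
      Nat.Coprime (((H ⊓ H.map (MulAut.conj g).toMonoidHom).subgroupOf H).index) p) :
    A.Normal := by
  have hpA' : IsPGroup p (A.subgroupOf H) := hApg.comap_subtype
  -- Step 1: A is contained in every conjugate of H.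
  have step1 : ∀ g : G, A ≤ H.map (MulAut.conj g).toMonoidHom := by
    intro g a ha
    have h := aux_normal_pgroup_le_of_coprime_index hp hAnorm hpA' (hconj g)
      (Subgroup.mem_subgroupOf.mpr ha : (⟨a, hAH ha⟩ : H) ∈ A.subgroupOf H)
    exact (Subgroup.mem_subgroupOf.mp h).2
  -- Step 2: every conjugate of A is contained in H.
  have step2 : ∀ g : G, ∀ a ∈ A, g * a * g⁻¹ ∈ H := by
    intro g a ha
    obtain ⟨h, hh, heq⟩ := step1 g⁻¹ ha
    simp only [MulEquiv.coe_toMonoidHom, MulAut.conj_apply] at heq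
    have : g * a * g⁻¹ = h := by
      rw [← heq]; group
    rw [this]; exact hh
  -- Step 3: every conjugate of A is contained in A.
  constructor
  intro a ha g
  have hmemH : g * a * g⁻¹ ∈ H := step2 g a ha
  -- the conjugate of A inside H
  set P : Subgroup G := A.map (MulAut.conj g).toMonoidHom with hP
  have hPpg : IsPGroup p (P.subgroupOf H) := (hApg.map _).comap_subtype
  have hle := aux_pgroup_le_normal_pgroup hp hAnorm hpA' hAidx hPpg
  have hmemP : (⟨g * a * g⁻¹, hmemH⟩ : H) ∈ P.subgroupOf H := by
    refine Subgroup.mem_subgroupOf.mpr ?_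
    exact ⟨a, ha, by simp [MulAut.conj_apply]⟩
  exact Subgroup.mem_subgroupOf.mp (hle hmemP)
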